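/- arXiv:2310.08472 — 4 statements merged into one kernel-verified Lean document; each statement's English description precedes it below -/
import Mathlib

section
/- Let (R, Fil_R^•) be a filtered ring and (M, Fil_M^•) a filtered module over it admitting a filtered basis (e_ν, r_ν)_{ν=1}^n, i.e. (e_ν) is an R-basis of M and Fil_M^r = Σ_{ν=1}^n Fil_R^{r−r_ν}·e_ν for all r. Then the Rees module Rees(Fil_M^•) = ⊕_{r∈ℤ} Fil_M^r t^{−r} ⊆ M ⊗_R R[t, t^{−1}] is a free graded module over the Rees algebra Rees(Fil_R^•) = ⊕_{r∈ℤ} Fil_R^r t^{−r} ⊆ R[t, t^{−1}], with homogeneous basis (e_ν t^{−r_ν})_{ν=1}^n. -/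
open scoped TensorProduct

/-- The Rees module `⊕_{r ∈ ℤ} Fil_M^r · t^{-r}` of a filtered module `(M, Fil_M)`, realized as
the `R`-submodule of `R[t, t⁻¹] ⊗[R] M` (with `R[t,t⁻¹] = AddMonoidAlgebra R ℤ`) generated, for
each degree `r`, by the elements `t^{-r} ⊗ x` with `x ∈ Fil_M^r`. -/
noncomputable def reesModule {R M : Type*} [CommRing R] [AddCommGroup M] [Module R M]
    (FilM : ℤ → Submodule R M) :
    Submodule R (AddMonoidAlgebra R ℤ ⊗[R] M) :=
  ⨆ s : ℤ, (FilM s).map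
    (TensorProduct.mk R (AddMonoidAlgebra R ℤ) M (AddMonoidAlgebra.single (-s) (1 : R)))

/-- If `(M, Fil_M)` is a filtered module over the filtered ring `(R, Fil_R)`
admitting a filtered basis `(e_ν, r_ν)` (so `(e_ν)` is an `R`-basis of `M` and
`Fil_M^r = ∑_ν Fil_R^{r - r_ν} · e_ν`), then the Rees module `⊕_r Fil_M^r t^{-r}` is a free
graded module over the Rees algebra `⊕_r Fil_R^r t^{-r} ⊆ R[t, t⁻¹]` with homogeneous basis
`(e_ν t^{-r_ν})`: each `t^{-r_ν} ⊗ e_ν` lies in the Rees module, and every element of the Rees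
module is uniquely a linear combination of the `t^{-r_ν} ⊗ e_ν` with coefficients in the Rees
algebra (i.e. Laurent polynomials `c` with coefficient at each exponent `m` in `Fil_R^{-m}`). -/
theorem stmt_9 {R M : Type*} [CommRing R] [AddCommGroup M] [Module R M]
    (FilR : ℤ → Ideal R) (FilM : ℤ → Submodule R M)
    (hR0 : FilR 0 = ⊤) (hRanti : Antitone FilR) (hRneg : ∀ j : ℤ, j ≤ 0 → FilR j = ⊤)
    (hRmul : ∀ (a b : ℤ), ∀ x ∈ FilR a, ∀ y ∈ FilR b, x * y ∈ FilR (a + b))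
    (hManti : Antitone FilM) (hMex : ∀ x : M, ∃ j, x ∈ FilM j)
    (hMsmul : ∀ (a b : ℤ), ∀ r ∈ FilR a, ∀ x ∈ FilM b, r • x ∈ FilM (a + b))
    {n : ℕ} (B : Module.Basis (Fin n) R M) (deg : Fin n → ℤ)
    (hfb : ∀ (r : ℤ) (x : M), x ∈ FilM r ↔
      ∃ c : Fin n → R, (∀ ν, c ν ∈ FilR (r - deg ν)) ∧ x = ∑ ν, c ν • B ν) :
    (∀ ν : Fin n,
      (AddMonoidAlgebra.single (-deg ν) (1 : R)) ⊗ₜ[R] B ν ∈ reesModule FilM) ∧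
    ∀ y ∈ reesModule FilM, ∃! c : Fin n → AddMonoidAlgebra R ℤ,
      (∀ (ν : Fin n) (m : ℤ), (c ν).coeff m ∈ FilR (-m)) ∧
      y = ∑ ν, c ν • ((AddMonoidAlgebra.single (-deg ν) (1 : R)) ⊗ₜ[R] B ν) := by
  classical
  set v : Fin n → AddMonoidAlgebra R ℤ ⊗[R] M :=
    fun ν => (AddMonoidAlgebra.single (-deg ν) (1 : R)) ⊗ₜ[R] B ν with hv
  have hBmem : ∀ ν, B ν ∈ FilM (deg ν) := by
    intro ν
    rw [hfb]
    refine ⟨fun μ => if μ = ν then 1 else 0, fun μ => ?_, by simp⟩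
    by_cases h : μ = ν
    · subst h; simp [hR0]
    · simp [h]
  have hmem : ∀ ν, v ν ∈ reesModule FilM := by
    intro ν
    refine Submodule.mem_iSup_of_mem (deg ν) ?_
    exact ⟨B ν, hBmem ν, rfl⟩
  -- the A-basis of the tensor product
  let bT := Algebra.TensorProduct.basis (AddMonoidAlgebra R ℤ) B
  have hvs : ∀ (c : AddMonoidAlgebra R ℤ) (ν : Fin n),
      c • v ν = (c * AddMonoidAlgebra.single (-deg ν) (1 : R)) • bT ν := by
    intro c ν
    rw [Algebra.TensorProduct.basis_repr_symm_apply', hv]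
    rw [TensorProduct.smul_tmul', smul_eq_mul]
  have hrepr : ∀ (a : Fin n → AddMonoidAlgebra R ℤ) (μ : Fin n),
      (bT.repr (∑ ν, a ν • bT ν)) μ = a μ := by
    intro a μ
    rw [map_sum]
    simp [Module.Basis.repr_self, Finsupp.smul_single, Finsupp.single_apply]
  have hcancel : ∀ a b : AddMonoidAlgebra R ℤ, ∀ ν : Fin n,
      a * AddMonoidAlgebra.single (-deg ν) (1 : R)
        = b * AddMonoidAlgebra.single (-deg ν) (1 : R) → a = b := by
    intro a b ν h
    have h3 := congrArg (· * AddMonoidAlgebra.single (deg ν) (1 : R)) h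
    simp only [mul_assoc, AddMonoidAlgebra.single_mul_single, neg_add_cancel, one_mul] at h3
    rwa [← AddMonoidAlgebra.one_def, mul_one, mul_one] at h3
  have hinj : ∀ a b : Fin n → AddMonoidAlgebra R ℤ,
      (∑ ν, a ν • v ν = ∑ ν, b ν • v ν) → ∀ ν, a ν = b ν := by
    intro a b h ν
    have ha : ∑ ν, a ν • v ν
        = ∑ ν, (a ν * AddMonoidAlgebra.single (-deg ν) (1 : R)) • bT ν :=
      Finset.sum_congr rfl fun ν _ => hvs (a ν) ν
    have hb : ∑ ν, b ν • v ν
        = ∑ ν, (b ν * AddMonoidAlgebra.single (-deg ν) (1 : R)) • bT ν :=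
      Finset.sum_congr rfl fun ν _ => hvs (b ν) ν
    rw [ha, hb] at h
    have := congrArg (fun z => (bT.repr z) ν) h
    simp only [hrepr] at this
    exact hcancel _ _ ν this
  refine ⟨hmem, fun y hy => ?_⟩
  have hex : ∃ c : Fin n → AddMonoidAlgebra R ℤ,
      (∀ (ν : Fin n) (m : ℤ), (c ν).coeff m ∈ FilR (-m)) ∧ y = ∑ ν, c ν • v ν := by
    refine Submodule.iSup_induction
      (motive := fun y => ∃ c : Fin n → AddMonoidAlgebra R ℤ,
        (∀ (ν : Fin n) (m : ℤ), (c ν).coeff m ∈ FilR (-m)) ∧ y = ∑ ν, c ν • v ν) _ hy ?_ ?_ ?_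
    · rintro s _ ⟨x, hx, rfl⟩
      obtain ⟨d, hd, hdx⟩ := (hfb s x).mp hx
      refine ⟨fun ν => AddMonoidAlgebra.single (deg ν - s) (d ν), ?_, ?_⟩
      · intro ν m
        have happ : (AddMonoidAlgebra.single (deg ν - s) (d ν) : AddMonoidAlgebra R ℤ).coeff m
            = if deg ν - s = m then d ν else 0 := by
          rw [AddMonoidAlgebra.coeff_single]; exact Finsupp.single_apply
        rw [happ]
        split
        · next h =>
            have : -m = s - deg ν := by omega
            rw [this]; exact hd ν
        · exact zero_mem _
      · have : ∀ ν : Fin n,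
            (AddMonoidAlgebra.single (deg ν - s) (d ν) : AddMonoidAlgebra R ℤ) • v ν
              = AddMonoidAlgebra.single (-s) (1 : R) ⊗ₜ[R] (d ν • B ν) := by
          intro ν
          rw [hv, TensorProduct.smul_tmul', smul_eq_mul,
            AddMonoidAlgebra.single_mul_single, mul_one]
          rw [TensorProduct.tmul_smul, TensorProduct.smul_tmul']
          congr 1
          rw [AddMonoidAlgebra.smul_single', mul_one]
          congr 1
          ring
        simp only [TensorProduct.mk_apply, this, ← TensorProduct.tmul_sum, ← hdx]
    · exact ⟨0, by simp, by simp⟩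
    · rintro x₁ x₂ ⟨c₁, hc₁, rfl⟩ ⟨c₂, hc₂, rfl⟩
      refine ⟨c₁ + c₂, fun ν m => add_mem (hc₁ ν m) (hc₂ ν m), ?_⟩
      rw [← Finset.sum_add_distrib]
      exact Finset.sum_congr rfl fun ν _ => (add_smul _ _ _).symm
  obtain ⟨c, hc1, hc2⟩ := hex
  refine ⟨c, ⟨hc1, hc2⟩, ?_⟩
  rintro c' ⟨hc'1, hc'2⟩
  have heq : ∑ ν, c' ν • v ν = ∑ ν, c ν • v ν := by
    exact hc'2.symm.trans hc2
  exact funext fun ν => hinj c' c heq ν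
end

section
/- Let (R, Fil_R^•) be a filtered ring and (M, Fil_M^•) a filtered module over it. Equip R̄ := R/Fil_R^1 with the trivial filtration (Fil^j = R̄ for j ≤ 0, Fil^j = 0 for j ≥ 1), so that its Rees algebra is the polynomial ring R̄[t] receiving a graded ring map from Rees(Fil_R^•). Then there is a canonical isomorphism of graded R̄[t]-modules Rees(Fil_M^•) ⊗_{Rees(Fil_R^•)} R̄[t] ≅ ⊕_{r∈ℤ} ( Fil_M^r / Σ_{i≥1} Fil_R^i·Fil_M^{r−i} ) t^{−r}, where on the right-hand side multiplication by t is induced by the inclusion maps Fil_M^{r+1} → Fil_M^r. -/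
open scoped TensorProduct

/-- For a filtered module `(M, Fil_M)` over a filtered ring `(R, Fil_R)`, the
canonical graded map identifies `Rees(Fil_M) ⊗_{Rees(Fil_R)} (R/Fil_R¹)[t]` with
`⊕_r (Fil_M^r / ∑_{i ≥ 1} Fil_R^i · Fil_M^{r-i}) t^{-r}`.  Since the tensor product is the
quotient of the Rees module by `J · Rees(Fil_M)`, where
`J = ker(Rees(Fil_R) → (R/Fil_R¹)[t]) = {f ∈ Rees(Fil_R) : f_m ∈ Fil_R¹ for all exponents
m ≥ 0}`, this says precisely that for every `r` and `x ∈ Fil_M^r`, the homogeneous element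
`x·t^{-r}` lies in `J · Rees(Fil_M)` if and only if `x ∈ ∑_{i ≥ 1} Fil_R^i · Fil_M^{r-i}`. -/
theorem stmt_10 {R M : Type*} [CommRing R] [AddCommGroup M] [Module R M]
    (FilR : ℤ → Ideal R) (FilM : ℤ → Submodule R M)
    (hR0 : FilR 0 = ⊤) (hRanti : Antitone FilR) (hRneg : ∀ j : ℤ, j ≤ 0 → FilR j = ⊤)
    (hRmul : ∀ (a b : ℤ), ∀ x ∈ FilR a, ∀ y ∈ FilR b, x * y ∈ FilR (a + b))
    (hManti : Antitone FilM) (hMex : ∀ x : M, ∃ j, x ∈ FilM j)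
    (hMsmul : ∀ (a b : ℤ), ∀ r ∈ FilR a, ∀ x ∈ FilM b, r • x ∈ FilM (a + b)) :
    ∀ r : ℤ, ∀ x ∈ FilM r,
      ((AddMonoidAlgebra.single (-r) (1 : R)) ⊗ₜ[R] x ∈
        Submodule.span R {z : AddMonoidAlgebra R ℤ ⊗[R] M |
          ∃ f : AddMonoidAlgebra R ℤ, (∀ m : ℤ, f.coeff m ∈ FilR (-m)) ∧
            (∀ m : ℤ, 0 ≤ m → f.coeff m ∈ FilR 1) ∧
            ∃ y ∈ reesModule FilM, z = f • y}) ↔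
      x ∈ ⨆ (i : ℤ) (_ : 1 ≤ i), FilR i • FilM (r - i) := by
  classical
  intro r x hx
  constructor
  · intro hmem
    -- component-extracting linear maps
    let φ : ℤ → (AddMonoidAlgebra R ℤ ⊗[R] M →ₗ[R] M) := fun d =>
      (Finsupp.lapply d) ∘ₗ (TensorProduct.finsuppScalarLeft R M ℤ).toLinearMap ∘ₗ
        (LinearMap.rTensor M (AddMonoidAlgebra.coeffLinearEquiv R).toLinearMap)
    have hφ : ∀ (p : AddMonoidAlgebra R ℤ) (m : M) (d : ℤ),
        φ d (p ⊗ₜ[R] m) = p.coeff d • m := by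
      intro p m d
      simp only [φ, LinearMap.comp_apply, LinearEquiv.coe_coe, Finsupp.lapply_apply,
        LinearMap.rTensor_tmul, AddMonoidAlgebra.coeffLinearEquiv_apply]
      exact TensorProduct.finsuppScalarLeft_apply_tmul_apply p.coeff m d
    have key : ∀ z ∈ Submodule.span R {z : AddMonoidAlgebra R ℤ ⊗[R] M |
          ∃ f : AddMonoidAlgebra R ℤ, (∀ m : ℤ, f.coeff m ∈ FilR (-m)) ∧
            (∀ m : ℤ, 0 ≤ m → f.coeff m ∈ FilR 1) ∧
            ∃ y ∈ reesModule FilM, z = f • y},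
        ∀ d : ℤ, φ d z ∈ ⨆ (i : ℤ) (_ : 1 ≤ i), FilR i • FilM (-d - i) := by
      intro z hz
      induction hz using Submodule.span_induction with
      | mem z hzset =>
        obtain ⟨f, hf1, hf2, y, hy, rfl⟩ := hzset
        -- induct over the Rees module structure of y
        refine Submodule.iSup_induction (x := y)
          (motive := fun y => ∀ d : ℤ, φ d (f • y) ∈
            ⨆ (i : ℤ) (_ : 1 ≤ i), FilR i • FilM (-d - i)) _ hy ?_ ?_ ?_
        · rintro s z ⟨m, hm, rfl⟩ d
          have hsm : f • ((TensorProduct.mk R (AddMonoidAlgebra R ℤ) M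
              (AddMonoidAlgebra.single (-s) (1 : R))) m)
              = (f * AddMonoidAlgebra.single (-s) (1 : R)) ⊗ₜ[R] m := by
            simp only [TensorProduct.mk_apply]
            rw [TensorProduct.smul_tmul', smul_eq_mul]
          rw [hsm, hφ]
          have hcoef : (f * AddMonoidAlgebra.single (-s) (1 : R)).coeff d = f.coeff (d + s) := by
            rw [AddMonoidAlgebra.coeff_mul_single_apply, mul_one, neg_neg]
          rw [hcoef]
          by_cases hcase : 1 ≤ -(d + s)
          · -- use i = -(d+s) = -d - s
            have h1 : f.coeff (d + s) ∈ FilR (-(d + s)) := by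
              have := hf1 (d + s); rwa [neg_add] at this ⊢
            have : f.coeff (d + s) • m ∈ FilR (-d - s) • FilM s := by
              refine Submodule.smul_mem_smul ?_ hm
              rwa [show -d - s = -(d + s) by ring]
            refine Submodule.mem_iSup_of_mem (-d - s) ?_
            refine Submodule.mem_iSup_of_mem ?_ ?_
            · rwa [show (1:ℤ) ≤ -d - s ↔ 1 ≤ -(d+s) by constructor <;> intro h <;> linarith]
            · rwa [show -d - (-d - s) = s by ring]
          · -- 0 ≤ d + s ; use i = 1
            push_neg at hcase
            have h0 : (0:ℤ) ≤ d + s := by linarith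
            have h1 : f.coeff (d + s) ∈ FilR 1 := hf2 _ h0
            have h2 : m ∈ FilM (-d - 1) := hManti (by linarith) hm
            refine Submodule.mem_iSup_of_mem 1 (Submodule.mem_iSup_of_mem le_rfl ?_)
            exact Submodule.smul_mem_smul h1 h2
        · intro d
          simp only [smul_zero, map_zero]
          exact Submodule.zero_mem _
        · intro y₁ y₂ h₁ h₂ d
          rw [smul_add, map_add]
          exact Submodule.add_mem _ (h₁ d) (h₂ d)
      | zero => intro d; simp only [map_zero]; exact Submodule.zero_mem _
      | add z₁ z₂ _ _ h₁ h₂ =>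
        intro d; rw [map_add]; exact Submodule.add_mem _ (h₁ d) (h₂ d)
      | smul a z _ h =>
        intro d; rw [map_smul]; exact Submodule.smul_mem _ a (h d)
    have := key _ hmem (-r)
    rw [hφ] at this
    simp only [AddMonoidAlgebra.coeff_single, Finsupp.single_eq_same, one_smul, neg_neg] at this
    exact this
  · intro hmem
    let ψ : M →ₗ[R] AddMonoidAlgebra R ℤ ⊗[R] M :=
      TensorProduct.mk R (AddMonoidAlgebra R ℤ) M (AddMonoidAlgebra.single (-r) (1 : R))
    have hle : (⨆ (i : ℤ) (_ : 1 ≤ i), FilR i • FilM (r - i)) ≤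
        (Submodule.span R {z : AddMonoidAlgebra R ℤ ⊗[R] M |
          ∃ f : AddMonoidAlgebra R ℤ, (∀ m : ℤ, f.coeff m ∈ FilR (-m)) ∧
            (∀ m : ℤ, 0 ≤ m → f.coeff m ∈ FilR 1) ∧
            ∃ y ∈ reesModule FilM, z = f • y}).comap ψ := by
      refine iSup_le fun i => iSup_le fun hi => ?_
      refine Submodule.smul_le.2 fun a ha m hm => ?_
      refine Submodule.subset_span ?_
      refine ⟨AddMonoidAlgebra.single (-i) a, ?_, ?_,
        AddMonoidAlgebra.single (-(r - i)) (1 : R) ⊗ₜ[R] m, ?_, ?_⟩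
      · intro k
        rw [AddMonoidAlgebra.coeff_single, Finsupp.single_apply]
        split
        · next h => subst h; simpa using ha
        · exact Submodule.zero_mem _
      · intro k hk
        rw [AddMonoidAlgebra.coeff_single, Finsupp.single_apply]
        rw [if_neg (by omega)]
        exact Submodule.zero_mem _
      · exact Submodule.mem_iSup_of_mem (r - i) ⟨m, hm, rfl⟩
      · show AddMonoidAlgebra.single (-r) (1 : R) ⊗ₜ[R] (a • m) = _
        have hfy : (AddMonoidAlgebra.single (-i) a : AddMonoidAlgebra R ℤ) •
            (AddMonoidAlgebra.single (-(r - i)) (1 : R) ⊗ₜ[R] m)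
            = AddMonoidAlgebra.single (-r) a ⊗ₜ[R] m := by
          rw [TensorProduct.smul_tmul', smul_eq_mul, AddMonoidAlgebra.single_mul_single, mul_one,
            show -i + -(r - i) = -r by ring]
        rw [hfy, ← TensorProduct.smul_tmul, AddMonoidAlgebra.smul_single', mul_one]
    exact hle hmem
end

section
/- Let (R, Fil_R^•) be a filtered ring with R local and Fil_R^1 contained in the maximal ideal of R, and let (M, Fil_M^•) be a filtered module over it with M finite free over R. Suppose: (a) for each r, the map Fil_M^{r+1}/(Σ_{i≥1}Fil_R^i·Fil_M^{r+1−i}) → Fil_M^r/(Σ_{i≥1}Fil_R^i·Fil_M^{r−i}) induced by inclusion is injective; and (b) there are elements e_ν ∈ Fil_M^{r_ν} (ν = 1, …, n) whose images ē_ν in M̄ := M/Fil_R^1·M form an R/Fil_R^1-basis of M̄ and satisfy F̄^r = Σ_{ν : r_ν ≥ r} (R/Fil_R^1)·ē_ν for all r, where F̄^r denotes the image of Fil_M^r in M̄. Then (e_ν, r_ν) is a filtered basis of (M, Fil_M^•): the e_ν form an R-basis of M and Fil_M^r = Σ_{ν=1}^n Fil_R^{r−r_ν}·e_ν for every r ∈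 ℤ. -/
/-- Lifting a filtered basis: let `(R, Fil_R)` be a filtered ring with `R`
local and `Fil_R¹` contained in the maximal ideal, and `(M, Fil_M)` a filtered module with `M`
finite free.  Assume (a) the transition maps
`Fil_M^{r+1}/(∑_{i≥1} Fil_R^i·Fil_M^{r+1-i}) → Fil_M^r/(∑_{i≥1} Fil_R^i·Fil_M^{r-i})` are
injective, and (b) there are `e_ν ∈ Fil_M^{r_ν}` whose images `ē_ν` in `M̄ = M/Fil_R¹·M` form an
`R/Fil_R¹`-basis and satisfy `F̄^r = ∑_{ν : r_ν ≥ r} (R/Fil_R¹)·ē_ν` where `F̄^r` is the image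
of `Fil_M^r` in `M̄`.  Then `(e_ν, r_ν)` is a filtered basis: `(e_ν)` is an `R`-basis of `M` and
`Fil_M^r = ∑_ν Fil_R^{r-r_ν}·e_ν` for all `r`. -/
theorem stmt_11 {R M : Type*} [CommRing R] [IsLocalRing R]
    [AddCommGroup M] [Module R M] [Module.Free R M] [Module.Finite R M]
    (FilR : ℤ → Ideal R) (FilM : ℤ → Submodule R M)
    (hR0 : FilR 0 = ⊤) (hRanti : Antitone FilR) (hRneg : ∀ j : ℤ, j ≤ 0 → FilR j = ⊤)
    (hRmul : ∀ (a b : ℤ), ∀ x ∈ FilR a, ∀ y ∈ FilR b, x * y ∈ FilR (a + b))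
    (hR1 : FilR 1 ≤ IsLocalRing.maximalIdeal R)
    (hManti : Antitone FilM) (hMex : ∀ x : M, ∃ j, x ∈ FilM j)
    (hMsmul : ∀ (a b : ℤ), ∀ r ∈ FilR a, ∀ x ∈ FilM b, r • x ∈ FilM (a + b))
    (n : ℕ) (e : Fin n → M) (deg : Fin n → ℤ)
    (he : ∀ ν, e ν ∈ FilM (deg ν))
    -- (a) injectivity of the transition maps between the graded quotients
    (ha : ∀ r : ℤ, ∀ x ∈ FilM (r + 1),
      x ∈ (⨆ (i : ℤ) (_ : 1 ≤ i), FilR i • FilM (r - i)) →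
      x ∈ (⨆ (i : ℤ) (_ : 1 ≤ i), FilR i • FilM (r + 1 - i)))
    -- (b) the images ē_ν form a basis of M̄ = M / Fil_R¹·M …
    (hgen : ∀ x : M, ∃ c : Fin n → R,
      x - ∑ ν, c ν • e ν ∈ FilR 1 • (⊤ : Submodule R M))
    (hind : ∀ c : Fin n → R,
      (∑ ν, c ν • e ν) ∈ FilR 1 • (⊤ : Submodule R M) → ∀ ν, c ν ∈ FilR 1)
    -- … and F̄^r = ∑_{ν : deg ν ≥ r} (R/Fil_R¹)·ē_ν
    (hfil : ∀ r : ℤ, ∀ x : M,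
      (∃ y ∈ FilM r, x - y ∈ FilR 1 • (⊤ : Submodule R M)) ↔
      ∃ c : Fin n → R, (∀ ν, deg ν < r → c ν = 0) ∧
        x - ∑ ν, c ν • e ν ∈ FilR 1 • (⊤ : Submodule R M)) :
    (LinearIndependent R e ∧ Submodule.span R (Set.range e) = ⊤) ∧
      ∀ r : ℤ, ∀ x : M, x ∈ FilM r ↔
        ∃ c : Fin n → R, (∀ ν, c ν ∈ FilR (r - deg ν)) ∧ x = ∑ ν, c ν • e ν := by
  classical
  have hjac : FilR 1 ≤ Ideal.jacobson ⊥ :=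
    le_trans hR1 (IsLocalRing.maximalIdeal_le_jacobson ⊥)
  -- spanning via Nakayama
  have hspan : Submodule.span R (Set.range e) = ⊤ := by
    have htop : (⊤ : Submodule R M) ≤ Submodule.span R (Set.range e) ⊔ FilR 1 • ⊤ := by
      intro x _
      obtain ⟨c, hc⟩ := hgen x
      have hx : x = (∑ ν, c ν • e ν) + (x - ∑ ν, c ν • e ν) := by abel
      rw [hx]
      refine Submodule.add_mem _ (Submodule.mem_sup_left ?_) (Submodule.mem_sup_right hc)
      exact Submodule.sum_mem _ fun ν _ =>
        Submodule.smul_mem _ _ (Submodule.subset_span ⟨ν, rfl⟩)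
    exact top_le_iff.mp
      (Submodule.le_of_le_smul_of_le_jacobson_bot Module.Finite.fg_top hjac htop)
  -- linear independence
  let φ : (Fin n → R) →ₗ[R] M :=
    { toFun := fun c => ∑ ν, c ν • e ν
      map_add' := fun c d => by simp [add_smul, Finset.sum_add_distrib]
      map_smul' := fun r c => by simp [mul_smul, Finset.smul_sum] }
  have hφ : ∀ c : Fin n → R, φ c = ∑ ν, c ν • e ν := fun c => rfl
  have hφsurj : Function.Surjective φ := by
    intro x
    have hx : x ∈ Submodule.span R (Set.range e) := by rw [hspan]; trivial
    obtain ⟨c, hc⟩ := (Submodule.mem_span_range_iff_exists_fun R).mp hx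
    exact ⟨c, hc⟩
  obtain ⟨ψ, hψ⟩ := Module.projective_lifting_property φ LinearMap.id hφsurj
  set σ : (Fin n → R) →ₗ[R] (Fin n → R) := LinearMap.id - ψ.comp φ with hσ
  have hσker : ∀ c, φ c = 0 → σ c = c := by
    intro c hc
    simp [hσ, hc]
  have hσrange : ∀ c, φ (σ c) = 0 := by
    intro c
    have h1 : φ (ψ (φ c)) = φ c := LinearMap.congr_fun hψ (φ c)
    simp [hσ, map_sub, h1]
  have hmaple : Submodule.map σ ⊤ ≤ LinearMap.ker φ := by
    rintro _ ⟨c, -, rfl⟩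
    exact LinearMap.mem_ker.mpr (hσrange c)
  have hker_le : LinearMap.ker φ ≤ FilR 1 • LinearMap.ker φ := by
    intro c hc
    have h0 : φ c = 0 := LinearMap.mem_ker.mp hc
    have h0' : (∑ ν, c ν • e ν) = 0 := by rw [← hφ c]; exact h0
    have hcI : ∀ ν, c ν ∈ FilR 1 := hind c (by rw [h0']; exact Submodule.zero_mem _)
    have hcmem : c ∈ FilR 1 • (⊤ : Submodule R (Fin n → R)) := by
      have hrep : (∑ ν, (c ν) • (Pi.single ν 1 : Fin n → R)) = c := by
        funext j
        simp [Finset.sum_apply, Pi.single_apply]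
      rw [← hrep]
      exact Submodule.sum_mem _ fun ν _ => Submodule.smul_mem_smul (hcI ν) trivial
    have h2 : σ c ∈ FilR 1 • Submodule.map σ ⊤ := by
      rw [← Submodule.map_smul'']
      exact Submodule.mem_map_of_mem hcmem
    rw [hσker c h0] at h2
    exact smul_mono_right _ hmaple h2
  have hkereq : LinearMap.ker φ = Submodule.map σ ⊤ :=
    le_antisymm (fun c hc => ⟨c, trivial, hσker c (LinearMap.mem_ker.mp hc)⟩) hmaple
  have hkerfg : (LinearMap.ker φ).FG := by
    rw [hkereq]
    exact Submodule.FG.map _ Module.Finite.fg_top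
  have hker : LinearMap.ker φ = ⊥ :=
    Submodule.eq_bot_of_le_smul_of_le_jacobson_bot (FilR 1) _ hkerfg hker_le hjac
  have hli : LinearIndependent R e := by
    rw [Fintype.linearIndependent_iff]
    intro c hc ν
    have h1 : c ∈ LinearMap.ker φ := LinearMap.mem_ker.mpr (by rw [hφ c]; exact hc)
    rw [hker, Submodule.mem_bot] at h1
    rw [h1]; rfl
  -- the filtration part
  let N : ℤ → Submodule R M := fun r =>
    { carrier := {x | ∃ c : Fin n → R, (∀ ν, c ν ∈ FilR (r - deg ν)) ∧ x = ∑ ν, c ν • e ν}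
      add_mem' := fun {a b} ha hb => by
        obtain ⟨c, hc, rfl⟩ := ha
        obtain ⟨d, hd, rfl⟩ := hb
        exact ⟨c + d, fun ν => Ideal.add_mem _ (hc ν) (hd ν),
          by simp [add_smul, Finset.sum_add_distrib]⟩
      zero_mem' := ⟨0, fun ν => by simp, by simp⟩
      smul_mem' := fun a x hx => by
        obtain ⟨c, hc, rfl⟩ := hx
        exact ⟨fun ν => a * c ν, fun ν => Ideal.mul_mem_left _ _ (hc ν),
          by simp [mul_smul, Finset.smul_sum]⟩ }
  have hmemN : ∀ (r : ℤ) (x : M), x ∈ N r ↔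
      (∃ c : Fin n → R, (∀ ν, c ν ∈ FilR (r - deg ν)) ∧ x = ∑ ν, c ν • e ν) :=
    fun r x => Iff.rfl
  have hNle : ∀ r : ℤ, N r ≤ FilM r := by
    intro r x hx
    obtain ⟨c, hc, rfl⟩ := (hmemN r x).mp hx
    refine Submodule.sum_mem _ fun ν _ => ?_
    have h1 := hMsmul (r - deg ν) (deg ν) (c ν) (hc ν) (e ν) (he ν)
    rwa [sub_add_cancel] at h1
  have hNsmul : ∀ (i t : ℤ) (a : R), a ∈ FilR i → ∀ x ∈ N t, a • x ∈ N (i + t) := by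
    intro i t a haI x hx
    obtain ⟨c, hc, rfl⟩ := (hmemN t x).mp hx
    refine (hmemN _ _).mpr ⟨fun ν => a * c ν, fun ν => ?_, by simp [mul_smul, Finset.smul_sum]⟩
    have h1 := hRmul i (t - deg ν) a haI (c ν) (hc ν)
    rwa [show i + (t - deg ν) = i + t - deg ν by ring] at h1
  obtain ⟨b, hb⟩ : ∃ b : ℤ, ∀ ν, b ≤ deg ν := by
    rcases isEmpty_or_nonempty (Fin n) with h | h
    · exact ⟨0, fun ν => h.elim ν⟩
    · exact ⟨Finset.univ.inf' Finset.univ_nonempty deg,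
        fun ν => Finset.inf'_le _ (Finset.mem_univ ν)⟩
  have hNtop : ∀ t ≤ b, N t = ⊤ := by
    intro t ht
    rw [eq_top_iff]
    intro x _
    have hx : x ∈ Submodule.span R (Set.range e) := by rw [hspan]; trivial
    obtain ⟨c, hc⟩ := (Submodule.mem_span_range_iff_exists_fun R).mp hx
    exact (hmemN _ _).mpr ⟨c, fun ν => by
      rw [hRneg (t - deg ν) (by linarith [hb ν])]; trivial, hc.symm⟩
  have hFtop : ∀ t ≤ b, FilM t = ⊤ := by
    intro t ht
    rw [eq_top_iff, ← hspan, Submodule.span_le]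
    rintro _ ⟨ν, rfl⟩
    exact hManti (le_trans ht (hb ν)) (he ν)
  have main : ∀ r : ℤ, b ≤ r → ∀ t ≤ r, FilM t ≤ N t := by
    have base : ∀ t ≤ b, FilM t ≤ N t := by
      intro t ht
      rw [hNtop t ht]
      exact le_top
    refine fun r hr => Int.le_induction (motive := fun r _ => ∀ t ≤ r, FilM t ≤ N t) base ?_ r hr
    intro r hbr IH t ht
    rcases lt_or_eq_of_le ht with h | h
    · exact IH t (by omega)
    · subst h
      intro x hx
      obtain ⟨c, hc0, hcx⟩ := (hfil (r + 1) x).mp ⟨x, hx, by simp⟩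
      have hsumN : (∑ ν, c ν • e ν) ∈ N (r + 1) := by
        refine (hmemN _ _).mpr ⟨c, fun ν => ?_, rfl⟩
        by_cases hν : deg ν < r + 1
        · rw [hc0 ν hν]; exact Submodule.zero_mem _
        · rw [hRneg _ (by omega)]; trivial
      have hsumF : (∑ ν, c ν • e ν) ∈ FilM (r + 1) := by
        refine Submodule.sum_mem _ fun ν _ => ?_
        by_cases hν : deg ν < r + 1
        · rw [hc0 ν hν]; simp
        · have h1 := hMsmul 0 (deg ν) (c ν) (by rw [hR0]; trivial) (e ν) (he ν)
          rw [zero_add] at h1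
          exact hManti (by omega) h1
      have hx'F : x - ∑ ν, c ν • e ν ∈ FilM (r + 1) := Submodule.sub_mem _ hx hsumF
      have climb : ∀ s : ℤ, b + 1 ≤ s → s ≤ r + 1 →
          x - ∑ ν, c ν • e ν ∈ ⨆ (i : ℤ) (_ : 1 ≤ i), FilR i • FilM (s - i) := by
        refine Int.le_induction
          (motive := fun s _ => s ≤ r + 1 →
            x - ∑ ν, c ν • e ν ∈ ⨆ (i : ℤ) (_ : 1 ≤ i), FilR i • FilM (s - i)) ?_ ?_
        · intro _
          have h1 : x - ∑ ν, c ν • e ν ∈ FilR 1 • FilM (b + 1 - 1) := by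
            rw [show (b + 1 - 1 : ℤ) = b by ring, hFtop b le_rfl]
            exact hcx
          exact Submodule.mem_iSup_of_mem 1 (Submodule.mem_iSup_of_mem le_rfl h1)
        · intro s hbs IH2 hs1
          exact ha s _ (hManti (by omega) hx'F) (IH2 (by omega))
      have hfin := climb (r + 1) (by omega) le_rfl
      have hle : (⨆ (i : ℤ) (_ : 1 ≤ i), FilR i • FilM (r + 1 - i)) ≤ N (r + 1) := by
        refine iSup₂_le fun i hi => ?_
        refine Submodule.smul_le.mpr fun a haI m hm => ?_
        have hmN : m ∈ N (r + 1 - i) := IH (r + 1 - i) (by omega) hm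
        have h1 := hNsmul i (r + 1 - i) a haI m hmN
        rwa [show i + (r + 1 - i) = r + 1 by ring] at h1
      have hx'N : x - ∑ ν, c ν • e ν ∈ N (r + 1) := hle hfin
      have hxeq : x = (x - ∑ ν, c ν • e ν) + ∑ ν, c ν • e ν := by abel
      rw [hxeq]
      exact Submodule.add_mem _ hx'N hsumN
  refine ⟨⟨hli, hspan⟩, fun r x => ?_⟩
  constructor
  · intro hx
    rcases le_or_gt r b with h | h
    · refine (hmemN r x).mp ?_
      rw [hNtop r h]; trivial
    · exact (hmemN r x).mp (main r h.le r le_rfl hx)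
  · rintro ⟨c, hc, rfl⟩
    exact hNle r ((hmemN r _).mpr ⟨c, hc, rfl⟩)
end

section
/- Let A be a commutative ring, d ∈ A a nonzerodivisor on A and on M, where M is a finite free A-module of rank n. Let N be a free A-module with basis (e_ν)_{ν=1}^n, and φ : N → M an injective A-linear map. Fix integers r_ν ≥ 0 and suppose: (a) φ(e_ν) ∈ d^{r_ν}M for each ν; (b) for some integer r with r ≥ r_ν for all ν one has d^rM ⊆ φ(N) and φ^{-1}(d^rM) = Σ_{ν=1}^n d^{r−r_ν}A·e_ν. Then the elements f_ν := d^{−r_ν}φ(e_ν) ∈ M (which are well-defined since d is a nonzerodivisor on M and φ(e_ν) ∈ d^{r_ν}M) form an A-basis of M. -/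
/-- Let `A` be a commutative ring and `d ∈ A` a nonzerodivisor on `A` and on
the finite free `A`-module `M` of rank `n`.  Let `N` be free with basis `(e_ν)` and
`φ : N → M` injective `A`-linear with `φ(e_ν) ∈ d^{r_ν} M`; assume that for some `r ≥ r_ν`
(all `ν`) one has `d^r M ⊆ φ(N)` and `φ⁻¹(d^r M) = ∑_ν d^{r - r_ν} A · e_ν`.  Then the elements
`f_ν = d^{-r_ν} φ(e_ν)`, i.e. the unique `f_ν` with `d^{r_ν} • f_ν = φ(e_ν)`, form an `A`-basis
of `M`. -/
theorem stmt_14 {A M N : Type*} [CommRing A] [AddCommGroup M] [Module A M]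
    [AddCommGroup N] [Module A N] (d : A)
    (hdA : ∀ a : A, d * a = 0 → a = 0)
    (hdM : ∀ m : M, d • m = 0 → m = 0)
    {n : ℕ} (BM : Module.Basis (Fin n) A M) (BN : Module.Basis (Fin n) A N)
    (φ : N →ₗ[A] M) (hφ : Function.Injective φ)
    (rν : Fin n → ℕ) (r : ℕ) (hr : ∀ ν, rν ν ≤ r)
    (ha : ∀ ν, ∃ m : M, φ (BN ν) = d ^ (rν ν) • m)
    (hb1 : ∀ m : M, ∃ y : N, φ y = d ^ r • m)
    (hb2 : ∀ y : N, (∃ m : M, φ y = d ^ r • m) ↔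
      ∃ c : Fin n → A, y = ∑ ν, (c ν * d ^ (r - rν ν)) • BN ν)
    (fν : Fin n → M) (hfν : ∀ ν, d ^ (rν ν) • fν ν = φ (BN ν)) :
    LinearIndependent A fν ∧ Submodule.span A (Set.range fν) = ⊤ := by
  have hpowA : ∀ k (a : A), d ^ k * a = 0 → a = 0 := by
    intro k
    induction k with
    | zero => intro a h; simpa using h
    | succ k ih =>
      intro a h
      exact ih a (hdA _ (by rw [← h]; ring))
  have hpowM : ∀ k (m : M), d ^ k • m = 0 → m = 0 := by
    intro k
    induction k with
    | zero => intro m h; simpa using h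
    | succ k ih =>
      intro m h
      refine ih m (hdM _ ?_)
      rw [← smul_assoc, smul_eq_mul, ← pow_succ']
      exact h
  -- key computation: d^r • (c ν • fν ν) = (c ν * d^(r - rν ν)) • φ (BN ν)
  have key : ∀ (c : Fin n → A) (ν : Fin n),
      d ^ r • (c ν • fν ν) = (c ν * d ^ (r - rν ν)) • φ (BN ν) := by
    intro c ν
    rw [← hfν ν, smul_comm, ← smul_assoc, smul_eq_mul, ← smul_assoc, smul_eq_mul,
      mul_assoc, ← pow_add]
    congr 2
    have := hr ν
    rw [Nat.sub_add_cancel (hr ν)]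
  constructor
  · rw [Fintype.linearIndependent_iff]
    intro c hc ν
    have h1 : φ (∑ μ, (c μ * d ^ (r - rν μ)) • BN μ) = 0 := by
      rw [map_sum]
      have : ∀ μ, φ ((c μ * d ^ (r - rν μ)) • BN μ) = d ^ r • (c μ • fν μ) := by
        intro μ
        rw [map_smul, key c μ]
      rw [Finset.sum_congr rfl fun μ _ => this μ, ← Finset.smul_sum, hc, smul_zero]
    have h2 : (∑ μ, (c μ * d ^ (r - rν μ)) • BN μ) = 0 := hφ (by simpa using h1)
    have h3 := (Fintype.linearIndependent_iff.mp BN.linearIndependent) _ h2 ν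
    exact hpowA (r - rν ν) (c ν) (by rw [mul_comm]; exact h3)
  · rw [Submodule.eq_top_iff']
    intro m
    obtain ⟨y, hy⟩ := hb1 m
    obtain ⟨c, hcy⟩ := (hb2 y).mp ⟨m, hy⟩
    have h1 : d ^ r • m = d ^ r • (∑ ν, c ν • fν ν) := by
      rw [← hy, hcy, map_sum, Finset.smul_sum]
      exact Finset.sum_congr rfl fun ν _ => by rw [map_smul, key c ν]
    have h2 : m = ∑ ν, c ν • fν ν := by
      have := hpowM r (m - ∑ ν, c ν • fν ν) (by rw [smul_sub, h1, sub_self])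
      exact sub_eq_zero.mp this
    rw [h2]
    exact Submodule.sum_mem _ fun ν _ =>
      Submodule.smul_mem _ _ (Submodule.subset_span ⟨ν, rfl⟩)
end
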